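/- Let K be a field and let P ∈ K[X] be a separable polynomial whose degree is 5 or 6. Suppose the Galois group Gal(P) of (the splitting field of) P over K has a normal subgroup of order 5. Then the order of Gal(P) divides 20, and P has an irreducible factor over K of degree exactly 5. -/

import Mathlib

open MulAction in
lemma keyAux {G S : Type*} [Group G] [Finite G] [Fintype S] [MulAction G S]
    (hfaith : ∀ g : G, (∀ x : S, g • x = x) → g = 1)
    (hS : Fintype.card S ≤ 6)
    (H : Subgroup G) (hHn : H.Normal) (hHcard : Nat.card H = 5) :
    Nat.card G ∣ 20 ∧ ∃ a : S, Nat.card (orbit H a) = 5 := by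
  classical
  haveI : Finite ↥H := Subtype.finite
  haveI hp5 : Fact (Nat.Prime 5) := ⟨by norm_num⟩
  haveI : IsCyclic ↥H := isCyclic_of_prime_card hHcard
  haveI hcommH : IsMulCommutative ↥H := by
    letI := IsCyclic.commGroup (α := ↥H)
    exact ⟨⟨fun a b => mul_comm a b⟩⟩
  -- orbit-stabilizer products
  have horbst : ∀ b : S, Nat.card (orbit H b) * Nat.card (stabilizer H b) = 5 := by
    intro b
    rw [← hHcard, ← Subgroup.card_mul_index (stabilizer H b), index_stabilizer,
      Nat.card_coe_set_eq, mul_comm]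
  -- a moved point exists
  obtain ⟨h₀, a, hmove⟩ : ∃ (h : ↥H) (a : S), h • a ≠ a := by
    by_contra hcon
    push_neg at hcon
    have : ∀ h : ↥H, h = 1 := by
      intro h
      exact Subtype.ext (hfaith _ (fun x => hcon h x))
    haveI : Subsingleton ↥H := ⟨fun x y => (this x).trans (this y).symm⟩
    have : Nat.card ↥H = 1 := Nat.card_eq_one_iff_unique.mpr ⟨inferInstance, ⟨1⟩⟩
    omega
  -- orbit of a has 5 elements
  have hstab1 : Nat.card (stabilizer H a) = 1 := by
    have hdvd : Nat.card (stabilizer H a) ∣ 5 := Dvd.intro_left _ (horbst a)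
    rcases (Nat.prime_five).eq_one_or_self_of_dvd _ hdvd with h | h
    · exact h
    · exfalso
      have : (stabilizer H a : Subgroup ↥H) = ⊤ := by
        apply Subgroup.eq_top_of_card_eq
        rw [h, hHcard]
      exact hmove ((MulAction.mem_stabilizer_iff).mp (this ▸ Subgroup.mem_top h₀))
  have horba : Nat.card (orbit H a) = 5 := by
    have := horbst a
    rw [hstab1, mul_one] at this
    exact this
  refine ⟨?_, a, horba⟩
  -- uniqueness of the 5-element orbit
  have huniq : ∀ b : S, Nat.card (orbit H b) = 5 → orbit H b = orbit H a := by
    intro b hb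
    by_contra hne
    have hdisj : Disjoint (orbit H b) (orbit H a) := by
      rw [Set.disjoint_left]
      intro z hz hz'
      exact hne ((orbit_eq_iff.mpr hz).symm.trans (orbit_eq_iff.mpr hz'))
    have hcard : (orbit H b ∪ orbit H a).ncard = 10 := by
      rw [Set.ncard_union_eq hdisj (Set.toFinite _) (Set.toFinite _),
        ← Nat.card_coe_set_eq, ← Nat.card_coe_set_eq, hb, horba]
    have hle : (orbit H b ∪ orbit H a).ncard ≤ 6 := by
      calc (orbit H b ∪ orbit H a).ncard ≤ (Set.univ : Set S).ncard :=
            Set.ncard_le_ncard (Set.subset_univ _) Set.finite_univ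
        _ = Fintype.card S := by rw [Set.ncard_univ, Nat.card_eq_fintype_card]
        _ ≤ 6 := hS
    omega
  -- centralizer of H equals H
  have hCle : Subgroup.centralizer (H : Set G) ≤ H := by
    intro τ hτ
    have hτc : ∀ h : ↥H, (h : G) * τ = τ * (h : G) := fun h =>
      Subgroup.mem_centralizer_iff.mp hτ _ h.2
    have hcomm : ∀ (h : ↥H) (x : S), (h : G) • (τ • x) = τ • ((h : G) • x) := by
      intro h x
      rw [smul_smul, smul_smul, hτc h]
    -- stabilizer of τ • a is trivial, so its orbit has 5 elements
    have hstabτ : stabilizer H (τ • a) = stabilizer H a := by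
      ext h
      simp only [mem_stabilizer_iff, Subgroup.smul_def]
      rw [hcomm h a]
      exact smul_left_cancel_iff τ
    have horbτ : Nat.card (orbit H (τ • a)) = 5 := by
      have := horbst (τ • a)
      rw [hstabτ, hstab1, mul_one] at this
      exact this
    have hmem : τ • a ∈ orbit H a := huniq _ horbτ ▸ mem_orbit_self (τ • a)
    obtain ⟨h₁, hh₁'⟩ := hmem
    have hh₁ : (h₁ : G) • a = τ • a := hh₁'
    -- τ' fixes everything
    set τ' : G := (h₁ : G)⁻¹ * τ with hτ'def
    have hτ'a : τ' • a = a := by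
      rw [hτ'def, mul_smul, ← hh₁, ← mul_smul, inv_mul_cancel, one_smul]
    have hτ'comm : ∀ (h : ↥H) (x : S), (h : G) • (τ' • x) = τ' • ((h : G) • x) := by
      intro h x
      have hc1 : Commute (h : G) (h₁ : G) := by
        have := congrArg (Subtype.val) (isMulCommutative_iff.mp hcommH h h₁)
        exact this
      have hc : Commute (h : G) τ' := (hc1.inv_right).mul_right (hτc h)
      rw [smul_smul, smul_smul, hc.eq]
    have hfixO : ∀ x ∈ orbit H a, τ' • x = x := by
      rintro x ⟨h, rfl⟩
      show τ' • ((h : G) • a) = (h : G) • a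
      rw [← hτ'comm h a, hτ'a]
    have hfix : ∀ x : S, τ' • x = x := by
      intro x
      by_cases hx : x ∈ orbit H a
      · exact hfixO x hx
      · have hx2 : τ' • x ∉ orbit H a := by
          intro hmem2
          have := hfixO _ hmem2
          exact hx (smul_left_cancel τ' this ▸ hmem2)
        have hcompl : ((orbit H a)ᶜ : Set S).ncard ≤ 1 := by
          have h1 := Set.ncard_add_ncard_compl (orbit H a) (Set.toFinite _) (Set.toFinite _)
          have h2 : (orbit H a).ncard = 5 := by
            rw [← Nat.card_coe_set_eq, horba]
          have h3 : Nat.card S ≤ 6 := by rw [Nat.card_eq_fintype_card]; exact hS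
          omega
        exact ((Set.ncard_le_one (Set.toFinite _)).mp hcompl (τ' • x) hx2 x hx)
    have : τ' = 1 := hfaith τ' hfix
    have hτeq : τ = (h₁ : G) := by
      rw [hτ'def] at this
      rwa [inv_mul_eq_one, eq_comm] at this
    rw [hτeq]; exact h₁.2
  have hCeq : Subgroup.centralizer (H : Set G) = H :=
    le_antisymm hCle (Subgroup.le_centralizer H)
  -- conjugation homomorphism to MulAut H
  let f : G →* MulAut ↥H := MulAut.conjNormal
  have hker : f.ker = Subgroup.centralizer (H : Set G) := by
    ext g
    simp only [MonoidHom.mem_ker, Subgroup.mem_centralizer_iff]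
    constructor
    · intro hg h hh
      have h1 : MulAut.conjNormal g ⟨h, hh⟩ = (⟨h, hh⟩ : ↥H) := by
        show (f g) ⟨h, hh⟩ = (⟨h, hh⟩ : ↥H)
        rw [hg]; rfl
      have e : g * h * g⁻¹ = h := by
        have := congrArg Subtype.val h1
        rwa [MulAut.conjNormal_apply] at this
      exact (mul_inv_eq_iff_eq_mul.mp e).symm
    · intro hg
      have hall : ∀ h : ↥H, (MulAut.conjNormal g) h = h := by
        intro h
        apply Subtype.ext
        rw [MulAut.conjNormal_apply]
        rw [← hg _ h.2, mul_assoc, mul_inv_cancel, mul_one]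
      show MulAut.conjNormal g = 1
      exact MulEquiv.ext fun h => (hall h).trans rfl
  haveI : Finite (MulAut ↥H) :=
    Finite.of_injective (fun e : MulAut ↥H => (e : ↥H ≃ ↥H))
      (fun a b hab => MulEquiv.ext fun x => by
        simpa using congrArg (fun e : ↥H ≃ ↥H => e x) hab)
  have hidx : f.ker.index ∣ 4 := by
    rw [Subgroup.index_ker]
    have h1 : Nat.card f.range ∣ Nat.card (MulAut ↥H) := Subgroup.card_subgroup_dvd_card _
    have h2 : Nat.card (MulAut ↥H) = 4 := by
      rw [IsCyclic.card_mulAut, hHcard]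
      decide
    rwa [h2] at h1
  have hGcard : Nat.card G = 5 * f.ker.index := by
    rw [← Subgroup.card_mul_index f.ker, hker, hCeq, hHcard]
  obtain ⟨d, hd⟩ := hidx
  exact ⟨d, by rw [hGcard, mul_assoc, ← hd]; norm_num⟩

open Polynomial in
lemma galAux_card_dvd {K : Type*} [Field K] (P : Polynomial K) (hP : Irreducible P)
    (h0 : P.natDegree ≠ 0) :
    Fintype.card (P.rootSet P.SplittingField) ∣ Nat.card P.Gal := by
  haveI htrans : MulAction.IsPretransitive P.Gal (P.rootSet P.SplittingField) := by
    constructor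
    intro x y
    have hx := minpoly.eq_of_irreducible hP (Polynomial.mem_rootSet.mp x.2).2
    have hy := minpoly.eq_of_irreducible hP (Polynomial.mem_rootSet.mp y.2).2
    obtain ⟨g, hg⟩ := (Normal.minpoly_eq_iff_mem_orbit P.SplittingField).mp (hy.symm.trans hx)
    exact ⟨g, Subtype.ext hg⟩
  obtain ⟨x, hx⟩ : ∃ x, eval₂ (algebraMap K P.SplittingField) x P = 0 :=
    by
      obtain ⟨x, hx⟩ := (SplittingField.splits P).exists_eval_eq_zero
        (by rw [degree_map]; exact fun h => h0 (natDegree_eq_of_degree_eq_some h))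
      exact ⟨x, by rwa [eval_map] at hx⟩
  have hxmem : x ∈ P.rootSet P.SplittingField :=
    Polynomial.mem_rootSet.mpr ⟨hP.ne_zero, by rwa [aeval_def]⟩
  set b : P.rootSet P.SplittingField := ⟨x, hxmem⟩
  have h1 := MulAction.index_stabilizer_of_transitive P.Gal b
  have h2 := Subgroup.card_mul_index (MulAction.stabilizer P.Gal b)
  rw [h1] at h2
  rw [← Nat.card_eq_fintype_card]
  exact Dvd.intro_left _ h2

/-- If `P` is a separable polynomial of degree 5 or 6 over a field `K` whose Galois
group has a normal subgroup of order 5, then `|Gal(P)|` divides 20 and `P` has an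
irreducible factor over `K` of degree exactly 5. -/
theorem stmt_5 (K : Type*) [Field K] (P : Polynomial K) (hsep : P.Separable)
    (hdeg : P.natDegree = 5 ∨ P.natDegree = 6)
    (H : Subgroup P.Gal) (hH : H.Normal) (hHcard : Nat.card H = 5) :
    Nat.card P.Gal ∣ 20 ∧
      ∃ Q : Polynomial K, Irreducible Q ∧ Q ∣ P ∧ Q.natDegree = 5 := by
  classical
  have hP0 : P ≠ 0 := by
    intro h
    rw [h, Polynomial.natDegree_zero] at hdeg
    omega
  have hcardS : Fintype.card (P.rootSet P.SplittingField) = P.natDegree :=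
    Polynomial.card_rootSet_eq_natDegree hsep (Polynomial.SplittingField.splits P)
  have hfaith : ∀ g : P.Gal, (∀ x : P.rootSet P.SplittingField, g • x = x) → g = 1 := by
    intro g hg
    apply Polynomial.Gal.ext (p := P)
    intro x hx
    exact congrArg Subtype.val (hg ⟨x, hx⟩)
  have hS6 : Fintype.card (P.rootSet P.SplittingField) ≤ 6 := by
    rw [hcardS]; omega
  obtain ⟨hdvd20, a, ha⟩ := keyAux hfaith hS6 H hH hHcard
  refine ⟨hdvd20, ?_⟩
  set α : P.SplittingField := (a : P.SplittingField) with hαdef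
  have haev : Polynomial.aeval α P = 0 := (Polynomial.mem_rootSet.mp a.2).2
  have hint : IsIntegral K α := .of_finite K α
  have hQdvd : minpoly K α ∣ P := minpoly.dvd K α haev
  refine ⟨minpoly K α, minpoly.irreducible hint, hQdvd, ?_⟩
  have hQsep := hsep.of_dvd hQdvd
  have hQsplits := (Polynomial.SplittingField.splits P).of_dvd
    (Polynomial.map_ne_zero hP0) (Polynomial.map_dvd _ hQdvd)
  have hcardQ : Fintype.card ((minpoly K α).rootSet P.SplittingField)
      = (minpoly K α).natDegree :=
    Polynomial.card_rootSet_eq_natDegree hQsep hQsplits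
  -- each element of the orbit is a root of the minimal polynomial
  have hmapsto : ∀ x : MulAction.orbit H a,
      ((x : P.rootSet P.SplittingField) : P.SplittingField)
        ∈ (minpoly K α).rootSet P.SplittingField := by
    intro x
    obtain ⟨h, hh'⟩ := x.2
    have hh : (h : P.Gal) • (x : P.rootSet P.SplittingField) = (h : P.Gal) • _ := rfl
    have hco : ((x : P.rootSet P.SplittingField) : P.SplittingField) = (h : P.Gal) α := by
      have : (h : P.Gal) • a = (x : P.rootSet P.SplittingField) := hh'
      rw [← this]
      rfl
    rw [Polynomial.mem_rootSet]
    refine ⟨minpoly.ne_zero hint, ?_⟩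
    rw [hco, Polynomial.aeval_algHom_apply, minpoly.aeval, map_zero]
  have h5le : 5 ≤ (minpoly K α).natDegree := by
    rw [← hcardQ, ← Nat.card_eq_fintype_card]
    have hjinj : Function.Injective
        (fun x : MulAction.orbit H a =>
          (⟨(x : P.rootSet P.SplittingField), hmapsto x⟩ :
            (minpoly K α).rootSet P.SplittingField)) := by
      intro x y hxy
      simp only [Subtype.mk.injEq] at hxy
      apply Subtype.ext
      apply Subtype.ext
      exact hxy
    calc 5 = Nat.card (MulAction.orbit H a) := ha.symm
      _ ≤ Nat.card ((minpoly K α).rootSet P.SplittingField) :=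
          Nat.card_le_card_of_injective _ hjinj
  have hle : (minpoly K α).natDegree ≤ P.natDegree :=
    Polynomial.natDegree_le_of_dvd hQdvd hP0
  rcases hdeg with h5 | h6
  · rw [h5] at hle; omega
  · by_contra hne
    have h6Q : (minpoly K α).natDegree = 6 := by rw [h6] at hle; omega
    obtain ⟨R, hR⟩ := hQdvd
    have hR0 : R ≠ 0 := fun h => hP0 (by rw [hR, h, mul_zero])
    have hQ0 : minpoly K α ≠ 0 := minpoly.ne_zero hint
    have hdegR : R.natDegree = 0 := by
      have := Polynomial.natDegree_mul hQ0 hR0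
      rw [← hR, h6, h6Q] at this
      omega
    obtain ⟨c, hc⟩ := Polynomial.natDegree_eq_zero.mp hdegR
    have hc0 : c ≠ 0 := fun h => hR0 (by rw [← hc, h, map_zero])
    rw [← hc] at hR
    have hassoc : Associated (minpoly K α) P := by
      have h' : Associated (minpoly K α) (minpoly K α * Polynomial.C c) :=
        associated_mul_unit_right _ _
          (Polynomial.isUnit_C.mpr (isUnit_iff_ne_zero.mpr hc0))
      rwa [← hR] at h'
    have hPirr : Irreducible P := hassoc.irreducible (minpoly.irreducible hint)
    have h6dvd : Fintype.card (P.rootSet P.SplittingField) ∣ Nat.card P.Gal :=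
      galAux_card_dvd P hPirr (by rw [h6]; omega)
    rw [hcardS, h6] at h6dvd
    have : (6 : ℕ) ∣ 20 := dvd_trans h6dvd hdvd20
    norm_num at this
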